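/- arXiv:2006.08351 — 7 statements merged into one kernel-verified Lean document; each statement's English description precedes it below -/
import Mathlib

section
/- Let P be a polynomial of degree n ≥ 2 with real coefficients. Then all zeros of P are real and distinct if and only if for every j ∈ {1, ..., n-1} and every real x, (P^{(n-j-1)})'(x)^2 - P^{(n-j-1)}(x) · (P^{(n-j-1)})''(x) > 0. -/
open Polynomial Finset Filter

namespace Chamberland

noncomputable def Wr (Q : ℝ[X]) (x : ℝ) : ℝ :=
  ((derivative Q).eval x) ^ 2 - Q.eval x * ((derivative (derivative Q)).eval x)

lemma wr_linear_mul (a : ℝ) (Q : ℝ[X]) (x : ℝ) :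
    Wr ((X - C a) * Q) x = (Q.eval x) ^ 2 + (x - a) ^ 2 * Wr Q x := by
  simp only [Wr, derivative_mul, derivative_sub, derivative_X, derivative_C, sub_zero, one_mul,
    derivative_add, eval_add, eval_mul, eval_sub, eval_X, eval_C, derivative_one, zero_mul,
    eval_zero]
  ring

lemma srr_of_points {Q : ℝ[X]} (hQ : Q ≠ 0) (s : Finset ℝ)
    (hs : ∀ r ∈ s, Q.eval r = 0) (hcard : Q.natDegree ≤ s.card) :
    Multiset.card Q.roots = Q.natDegree ∧ Q.roots.Nodup := by
  have hle : s.val ≤ Q.roots := by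
    rw [Multiset.le_iff_count]
    intro a
    by_cases ha : a ∈ s
    · have h1 : s.val.count a = 1 := Multiset.count_eq_one_of_mem s.nodup ha
      rw [h1, Nat.one_le_iff_ne_zero, Ne, Multiset.count_eq_zero, not_not, mem_roots hQ]
      exact hs a ha
    · simp [Multiset.count_eq_zero_of_notMem, ha]
  have h1 : s.card ≤ Multiset.card Q.roots := by
    simpa using Multiset.card_le_card hle
  have h2 := Q.card_roots'
  have hcardeq : Multiset.card Q.roots = Q.natDegree := le_antisymm h2 (le_trans hcard h1)
  have heq : s.val = Q.roots := Multiset.eq_of_le_of_card_le hle (by simp only [Finset.card] at h1 hcard ⊢; omega)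
  exact ⟨hcardeq, heq ▸ s.nodup⟩

lemma factored {Q : ℝ[X]} (h1 : Multiset.card Q.roots = Q.natDegree) (h2 : Q.roots.Nodup) :
    Q = C Q.leadingCoeff * ∏ r ∈ Q.roots.toFinset, (X - C r) := by
  conv_lhs => rw [← C_leadingCoeff_mul_prod_multiset_X_sub_C h1]
  congr 1
  rw [Finset.prod_eq_multiset_prod, Multiset.toFinset_val, Multiset.dedup_eq_self.2 h2]

lemma eval_prod_ne_zero (c : ℝ) (hc : c ≠ 0) (t : Finset ℝ) (a : ℝ) (ha : a ∉ t) :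
    eval a (C c * ∏ r ∈ t, (X - C r)) ≠ 0 := by
  simp only [eval_mul, eval_C, eval_prod, eval_sub, eval_X, mul_ne_zero_iff]
  refine ⟨hc, Finset.prod_ne_zero_iff.2 fun r hr => ?_⟩
  exact sub_ne_zero.2 fun h => ha (h ▸ hr)

lemma wr_inv (c : ℝ) (hc : c ≠ 0) (t : Finset ℝ) (x : ℝ) :
    0 ≤ Wr (C c * ∏ r ∈ t, (X - C r)) x ∧
      (Wr (C c * ∏ r ∈ t, (X - C r)) x = 0 → eval x (C c * ∏ r ∈ t, (X - C r)) ≠ 0) := by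
  induction t using Finset.induction generalizing x with
  | empty => simpa [Wr] using hc
  | @insert a t ha ih =>
    have hrw : C c * ∏ r ∈ insert a t, (X - C r) = (X - C a) * (C c * ∏ r ∈ t, (X - C r)) := by
      rw [Finset.prod_insert ha]; ring
    rw [hrw, wr_linear_mul]
    set Q := C c * ∏ r ∈ t, (X - C r) with hQdef
    obtain ⟨ih1, ih2⟩ := ih x
    constructor
    · positivity
    · intro h0
      have hq : Q.eval x = 0 ∧ (x - a) ^ 2 * Wr Q x = 0 := by
        constructor <;> nlinarith [sq_nonneg (Q.eval x), sq_nonneg (x - a),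
          mul_nonneg (sq_nonneg (x - a)) ih1]
      have hW : Wr Q x ≠ 0 := fun h => ih2 h hq.1
      have hxa : x = a := by
        have : (x - a) ^ 2 = 0 := by
          rcases mul_eq_zero.1 hq.2 with h | h
          · exact h
          · exact absurd h hW
        nlinarith [this]
      exact absurd hq.1 (hxa ▸ eval_prod_ne_zero c hc t a ha)

lemma wr_pos (c : ℝ) (hc : c ≠ 0) (t : Finset ℝ) (ht : t.Nonempty) (x : ℝ) :
    0 < Wr (C c * ∏ r ∈ t, (X - C r)) x := by
  obtain ⟨a, ha⟩ := ht
  have hrw : C c * ∏ r ∈ t, (X - C r) = (X - C a) * (C c * ∏ r ∈ t.erase a, (X - C r)) := by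
    rw [← Finset.mul_prod_erase t _ ha]; ring
  rw [hrw, wr_linear_mul]
  set Q := C c * ∏ r ∈ t.erase a, (X - C r) with hQdef
  obtain ⟨ih1, ih2⟩ := wr_inv c hc (t.erase a) x
  rcases eq_or_ne (Q.eval x) 0 with hq | hq
  · have hW : Wr Q x ≠ 0 := fun h => ih2 h hq
    have hxa : x ≠ a := by
      rintro rfl
      exact eval_prod_ne_zero c hc (t.erase x) x (Finset.notMem_erase x t) hq
    have hxa' : x - a ≠ 0 := sub_ne_zero.2 hxa
    have h1 : 0 < (x - a) ^ 2 := by positivity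
    have h2 : 0 < Wr Q x := lt_of_le_of_ne ih1 (Ne.symm hW)
    nlinarith
  · nlinarith [sq_pos_of_ne_zero hq, mul_nonneg (sq_nonneg (x - a)) ih1]

lemma deriv_data {Q : ℝ[X]} {m : ℕ} (h : Q.natDegree = m + 1) :
    (derivative Q).natDegree = m ∧ (derivative Q).leadingCoeff = (m + 1) * Q.leadingCoeff := by
  have hQ0 : Q ≠ 0 := fun h0 => by simp [h0] at h
  have hcoeff : (derivative Q).coeff m = (m + 1) * Q.leadingCoeff := by
    rw [coeff_derivative, ← h]
    rw [show Q.coeff (Q.natDegree) = Q.leadingCoeff from rfl]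
    push_cast; ring
  have hne : (derivative Q).coeff m ≠ 0 := by
    rw [hcoeff]
    exact mul_ne_zero (by positivity) (leadingCoeff_ne_zero.2 hQ0)
  have hge : m ≤ (derivative Q).natDegree := le_natDegree_of_ne_zero hne
  have hlt : (derivative Q).natDegree < Q.natDegree := natDegree_derivative_lt (by omega)
  have hdeg : (derivative Q).natDegree = m := by omega
  refine ⟨hdeg, ?_⟩
  rw [leadingCoeff, hdeg, hcoeff]

lemma srr_derivative {Q : ℝ[X]} {d : ℕ} (hd : Q.natDegree = d) (h1 : 1 ≤ d)
    (hcard : Multiset.card Q.roots = d) (hnd : Q.roots.Nodup) :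
    (derivative Q).natDegree = d - 1 ∧ Multiset.card (derivative Q).roots = d - 1 ∧
      (derivative Q).roots.Nodup := by
  obtain ⟨m, rfl⟩ : ∃ m, d = m + 1 := ⟨d - 1, by omega⟩
  obtain ⟨hdd, -⟩ := deriv_data (by omega : Q.natDegree = m + 1)
  have htf : Q.roots.toFinset.card = m + 1 := by
    rw [Multiset.toFinset_card_eq_card_iff_nodup.2 hnd, hcard]
  have hrolle := Q.card_roots_toFinset_le_derivative
  have hcle : Multiset.card (derivative Q).roots ≤ m := by
    simpa [hdd] using (derivative Q).card_roots'
  have htfle := (derivative Q).roots.toFinset_card_le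
  have heq : (derivative Q).roots.toFinset.card = Multiset.card (derivative Q).roots := by omega
  have hnodup := Multiset.toFinset_card_eq_card_iff_nodup.1 heq
  exact ⟨by omega, by omega, hnodup⟩

lemma iterate_natDegree {P : ℝ[X]} {n : ℕ} (hdeg : P.natDegree = n) :
    ∀ m, m ≤ n → (derivative^[m] P).natDegree = n - m := by
  intro m
  induction m with
  | zero => simpa using hdeg
  | succ k ih =>
    intro hk
    rw [Function.iterate_succ_apply']
    have h1 : (derivative^[k] P).natDegree = (n - k - 1) + 1 := by
      rw [ih (by omega)]; omega
    have := (deriv_data h1).1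
    omega

lemma srr_linear {Q : ℝ[X]} (h : Q.natDegree = 1) :
    Multiset.card Q.roots = 1 ∧ Q.roots.Nodup := by
  have hQ0 : Q ≠ 0 := fun h0 => by simp [h0] at h
  have ha : Q.coeff 1 ≠ 0 := by
    have : Q.coeff 1 = Q.leadingCoeff := by rw [leadingCoeff, h]
    rw [this]
    exact leadingCoeff_ne_zero.2 hQ0
  have heval : ∀ x : ℝ, Q.eval x = Q.coeff 0 + Q.coeff 1 * x := by
    intro x
    rw [eval_eq_sum_range, h]
    simp [Finset.sum_range_succ]
  have key := srr_of_points hQ0 {-(Q.coeff 0) / Q.coeff 1} (fun r hr => by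
    simp only [Finset.mem_singleton] at hr
    subst hr
    rw [heval]
    field_simp
    ring) (by simp [h])
  rw [h] at key
  exact key

lemma factored_fin {D : ℝ[X]} {d : ℕ} (hdeg : D.natDegree = d)
    (hcard : Multiset.card D.roots = d) (hnodup : D.roots.Nodup) :
    ∃ r : Fin d → ℝ, StrictMono r ∧ D = C D.leadingCoeff * ∏ i, (X - C (r i)) := by
  have hL : (↑(D.roots.sort (· ≤ ·)) : Multiset ℝ) = D.roots := D.roots.sort_eq _
  set L := D.roots.sort (· ≤ ·) with hLdef
  have hlen : L.length = d := by
    rw [← Multiset.coe_card, hL, hcard]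
  have hnodupL : L.Nodup := by rw [← Multiset.coe_nodup, hL]; exact hnodup
  have hsorted : L.Pairwise (· < ·) :=
    ((Multiset.pairwise_sort _ _).and hnodupL).imp fun h => lt_of_le_of_ne h.1 h.2
  subst hlen
  refine ⟨L.get, hsorted.sortedLT.strictMono_get, ?_⟩
  conv_lhs => rw [← C_leadingCoeff_mul_prod_multiset_X_sub_C (hcard.trans hdeg.symm)]
  congr 1
  rw [← hL]
  conv_lhs => rw [← List.ofFn_get L]
  rw [Multiset.map_coe, List.map_ofFn, Multiset.prod_coe, List.prod_ofFn]
  simp [Function.comp]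

lemma step {Q : ℝ[X]} {e : ℕ} (hdeg : Q.natDegree = (e + 1) + 1)
    (hDcard : Multiset.card (derivative Q).roots = e + 1)
    (hDnodup : (derivative Q).roots.Nodup)
    (hW : ∀ x, 0 < Wr Q x) :
    Multiset.card Q.roots = (e + 1) + 1 ∧ Q.roots.Nodup := by
  set d := e + 1 with hd
  obtain ⟨hDdeg, hDlc⟩ := deriv_data hdeg
  have hQ0 : Q ≠ 0 := fun h0 => by simp [h0] at hdeg
  have hQl : Q.leadingCoeff ≠ 0 := leadingCoeff_ne_zero.2 hQ0
  have hD0 : derivative Q ≠ 0 := fun h0 => by rw [h0, natDegree_zero] at hDdeg; omega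
  have hc : (derivative Q).leadingCoeff ≠ 0 := leadingCoeff_ne_zero.2 hD0
  obtain ⟨r, hr, hfact⟩ := factored_fin hDdeg hDcard hDnodup
  set c := (derivative Q).leadingCoeff with hcdef
  set σ : ℝ := (-1) ^ (d + 1) * c with hσdef
  -- evaluations of D and derivative D at the roots r k
  have hDeval : ∀ k : Fin d, (derivative Q).eval (r k) = 0 := by
    intro k
    rw [hfact]
    simp only [eval_mul, eval_C, eval_prod, eval_sub, eval_X]
    rw [← Finset.mul_prod_erase _ _ (Finset.mem_univ k)]
    simp
  have hdDeval : ∀ k : Fin d,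
      (derivative (derivative Q)).eval (r k) = c * ∏ j ∈ Finset.univ.erase k, (r k - r j) := by
    intro k
    have hfacD : derivative Q
        = (X - C (r k)) * (C c * ∏ j ∈ Finset.univ.erase k, (X - C (r j))) := by
      rw [hfact, ← Finset.mul_prod_erase _ _ (Finset.mem_univ k)]; ring
    rw [hfacD, derivative_mul]
    simp [eval_prod]
  -- sign of the product
  have hprodsign : ∀ k : Fin d,
      0 < (-1 : ℝ) ^ (d - 1 - (k : ℕ)) * ∏ j ∈ Finset.univ.erase k, (r k - r j) := by
    intro k
    have hsplit : Finset.univ.erase k = Finset.Iio k ∪ Finset.Ioi k := by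
      ext j
      simp only [Finset.mem_erase, Finset.mem_univ, and_true, Finset.mem_union,
        Finset.mem_Iio, Finset.mem_Ioi]
      exact ne_iff_lt_or_gt
    have hdisj : Disjoint (Finset.Iio k) (Finset.Ioi k) :=
      Finset.disjoint_left.2 fun j hj hj2 =>
        absurd (Finset.mem_Iio.1 hj) (not_lt.2 (Finset.mem_Ioi.1 hj2).le)
    have hApos : 0 < ∏ j ∈ Finset.Iio k, (r k - r j) :=
      Finset.prod_pos fun j hj => sub_pos.2 (hr (Finset.mem_Iio.1 hj))
    have hBpos : 0 < ∏ j ∈ Finset.Ioi k, (r j - r k) :=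
      Finset.prod_pos fun j hj => sub_pos.2 (hr (Finset.mem_Ioi.1 hj))
    have hIoi : ∏ j ∈ Finset.Ioi k, (r k - r j)
        = (-1 : ℝ) ^ (d - 1 - (k : ℕ)) * ∏ j ∈ Finset.Ioi k, (r j - r k) := by
      have h1 : ∀ j ∈ Finset.Ioi k, (r k - r j) = (-1) * (r j - r k) := fun j _ => by ring
      rw [Finset.prod_congr rfl h1, Finset.prod_mul_distrib, Finset.prod_const, Fin.card_Ioi]
    have hsq : (-1 : ℝ) ^ (d - 1 - (k : ℕ)) * (-1 : ℝ) ^ (d - 1 - (k : ℕ)) = 1 := by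
      rw [← pow_add]
      exact Even.neg_one_pow ⟨_, rfl⟩
    have hkey : (-1 : ℝ) ^ (d - 1 - (k : ℕ)) * ∏ j ∈ Finset.univ.erase k, (r k - r j)
        = (∏ j ∈ Finset.Iio k, (r k - r j)) * ∏ j ∈ Finset.Ioi k, (r j - r k) := by
      rw [hsplit, Finset.prod_union hdisj, hIoi]
      linear_combination ((∏ j ∈ Finset.Iio k, (r k - r j)) *
        ∏ j ∈ Finset.Ioi k, (r j - r k)) * hsq
    rw [hkey]
    exact mul_pos hApos hBpos
  -- sign of Q at the roots of D
  have hQsign : ∀ k : Fin d, 0 < (-1 : ℝ) ^ ((k : ℕ) + 1) * σ * Q.eval (r k) := by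
    intro k
    have hWk := hW (r k)
    rw [Wr, hDeval k, hdDeval k] at hWk
    norm_num at hWk
    have h1 := hprodsign k
    have hG1 : 0 < (-1 : ℝ) ^ (d - 1 - (k : ℕ)) * (-(Q.eval (r k) * c)) := by
      nlinarith [mul_pos h1 (neg_pos.2 hWk), sq_nonneg (∏ j ∈ Finset.univ.erase k, (r k - r j))]
    have hde : ((k : ℕ) + 1) + (d + 1) = (d - 1 - (k : ℕ)) + 1 + (2 * (k : ℕ) + 2) := by
      have := k.isLt
      omega
    have hkey : (-1 : ℝ) ^ ((k : ℕ) + 1) * (-1 : ℝ) ^ (d + 1) = -(-1 : ℝ) ^ (d - 1 - (k : ℕ)) := by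
      rw [← pow_add, hde, pow_add, pow_succ]
      have h2 : (-1 : ℝ) ^ (2 * (k : ℕ) + 2) = 1 := Even.neg_one_pow ⟨(k : ℕ) + 1, by ring⟩
      rw [h2]
      ring
    have heq : (-1 : ℝ) ^ ((k : ℕ) + 1) * σ * Q.eval (r k)
        = (-1 : ℝ) ^ (d - 1 - (k : ℕ)) * (-(Q.eval (r k) * c)) := by
      rw [hσdef]
      linear_combination (c * Q.eval (r k)) * hkey
    rw [heq]
    exact hG1
  -- endpoints
  have hdegR : (C c * Q).natDegree = d + 1 := by rw [natDegree_C_mul hc, hdeg]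
  have hRpos : 0 < (C c * Q).leadingCoeff := by
    rw [leadingCoeff_mul, leadingCoeff_C]
    have h2 : c * Q.leadingCoeff = ((d : ℝ) + 1) * Q.leadingCoeff ^ 2 := by
      rw [hDlc]; push_cast; ring
    rw [h2]
    positivity
  have hdegRpos : 0 < (C c * Q).degree := natDegree_pos_iff_degree_pos.1 (by omega)
  obtain ⟨xhi, hxhi_sign, hxhi_gt⟩ :=
    (((tendsto_atTop_of_leadingCoeff_nonneg _ hdegRpos hRpos.le).eventually_gt_atTop 0).and
      (eventually_gt_atTop (r (Fin.last e)))).exists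
  rw [eval_mul, eval_C] at hxhi_sign
  obtain ⟨xlo, hlo_lt, hlo_sign⟩ : ∃ xlo, xlo < r 0 ∧ 0 < σ * Q.eval xlo := by
    have hx_ne : (-X : ℝ[X]).natDegree ≠ 0 := by simp
    have hdeg2 : ((C c * Q).comp (-X)).natDegree = d + 1 := by
      rw [natDegree_comp, natDegree_neg, natDegree_X, mul_one, hdegR]
    have hlc2 : ((C c * Q).comp (-X)).leadingCoeff
        = (C c * Q).leadingCoeff * (-1) ^ (d + 1) := by
      rw [leadingCoeff_comp hx_ne, hdegR]
      congr 1
      simp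
    have heval2 : ∀ x : ℝ, ((C c * Q).comp (-X)).eval x = c * Q.eval (-x) := by
      intro x
      rw [eval_comp]
      simp
    have hdeg2pos : 0 < ((C c * Q).comp (-X)).degree := natDegree_pos_iff_degree_pos.1 (by omega)
    rcases Nat.even_or_odd (d + 1) with hpar | hpar
    · have hlcpos : 0 ≤ ((C c * Q).comp (-X)).leadingCoeff := by
        rw [hlc2, hpar.neg_one_pow, mul_one]
        exact hRpos.le
      obtain ⟨z, hz1, hz2⟩ :=
        (((tendsto_atTop_of_leadingCoeff_nonneg _ hdeg2pos hlcpos).eventually_gt_atTop 0).and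
          (eventually_gt_atTop (-(r 0)))).exists
      refine ⟨-z, by linarith, ?_⟩
      rw [hσdef, hpar.neg_one_pow, one_mul]
      rw [heval2] at hz1
      exact hz1
    · have hlcneg : ((C c * Q).comp (-X)).leadingCoeff ≤ 0 := by
        rw [hlc2, hpar.neg_one_pow, mul_neg_one]
        linarith
      obtain ⟨z, hz1, hz2⟩ :=
        (((tendsto_atBot_of_leadingCoeff_nonpos _ hdeg2pos hlcneg).eventually
            (eventually_lt_atBot 0)).and (eventually_gt_atTop (-(r 0)))).exists
      refine ⟨-z, by linarith, ?_⟩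
      rw [hσdef, hpar.neg_one_pow]
      rw [heval2] at hz1
      nlinarith
  -- the chain of points with alternating signs
  set t : Fin (d + 2) → ℝ := Fin.cons xlo (Fin.snoc r xhi) with htdef
  have htvalr : ∀ j : Fin d, t (Fin.succ (Fin.castSucc j)) = r j := by
    intro j
    rw [htdef, Fin.cons_succ, Fin.snoc_castSucc]
  have htmono : StrictMono t := by
    rw [Fin.strictMono_iff_lt_succ]
    intro i
    induction i using Fin.cases with
    | zero =>
      have h1 : t (Fin.castSucc 0) = xlo := by
        rw [Fin.castSucc_zero, htdef, Fin.cons_zero]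
      have h2 : t (Fin.succ 0) = r 0 := by
        rw [show (0 : Fin (d + 1)) = Fin.castSucc (0 : Fin d) from Fin.castSucc_zero.symm]
        exact htvalr 0
      rw [h1, h2]
      exact hlo_lt
    | succ j =>
      have h1 : t (Fin.castSucc (Fin.succ j)) = r j := by
        rw [← Fin.succ_castSucc]
        exact htvalr j
      rw [h1]
      rcases Fin.eq_castSucc_or_eq_last j with ⟨m, rfl⟩ | rfl
      · have h2 : t (Fin.succ (Fin.succ (Fin.castSucc m))) = r (Fin.succ m) := by
          rw [Fin.succ_castSucc]
          exact htvalr (Fin.succ m)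
        rw [h2]
        exact hr (Fin.castSucc_lt_succ : Fin.castSucc m < Fin.succ m)
      · have h2 : t (Fin.succ (Fin.succ (Fin.last e))) = xhi := by
          rw [htdef, Fin.cons_succ, Fin.succ_last, Fin.snoc_last]
        rw [h2]
        exact hxhi_gt
  have htsign : ∀ i : Fin (d + 2), 0 < (-1 : ℝ) ^ (i : ℕ) * σ * Q.eval (t i) := by
    intro i
    induction i using Fin.cases with
    | zero => simpa [htdef] using hlo_sign
    | succ j =>
      rw [htdef, Fin.cons_succ, Fin.val_succ]
      rcases Fin.eq_castSucc_or_eq_last j with ⟨k, rfl⟩ | rfl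
      · rw [Fin.snoc_castSucc, Fin.coe_castSucc]
        exact hQsign k
      · rw [Fin.snoc_last, Fin.val_last]
        have h3 : (-1 : ℝ) ^ (d + 1) * σ = c := by
          rw [hσdef, ← mul_assoc, ← pow_add]
          have heven : Even (d + 1 + (d + 1)) := ⟨d + 1, rfl⟩
          rw [heven.neg_one_pow, one_mul]
        rw [h3]
        exact hxhi_sign
  -- roots between consecutive chain points
  have hroots : ∀ i : Fin (d + 1),
      ∃ z, z ∈ Set.Ioo (t (Fin.castSucc i)) (t (Fin.succ i)) ∧ Q.eval z = 0 := by
    intro i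
    have hab : t (Fin.castSucc i) ≤ t (Fin.succ i) := (htmono (Fin.castSucc_lt_succ : Fin.castSucc i < Fin.succ i)).le
    have ha := htsign (Fin.castSucc i)
    have hb := htsign (Fin.succ i)
    rw [Fin.coe_castSucc] at ha
    rw [Fin.val_succ] at hb
    have hb' : 0 < -((-1 : ℝ) ^ (i : ℕ) * σ * Q.eval (t (Fin.succ i))) := by
      have hh : -((-1 : ℝ) ^ (i : ℕ) * σ * Q.eval (t (Fin.succ i)))
          = (-1 : ℝ) ^ ((i : ℕ) + 1) * σ * Q.eval (t (Fin.succ i)) := by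
        rw [pow_succ]; ring
      rw [hh]
      exact hb
    have hprod : Q.eval (t (Fin.castSucc i)) * Q.eval (t (Fin.succ i)) < 0 := by
      nlinarith [mul_pos ha hb', sq_nonneg ((-1 : ℝ) ^ (i : ℕ) * σ)]
    rcases lt_trichotomy (Q.eval (t (Fin.castSucc i))) 0 with hA | hA | hA
    · have hB : 0 < Q.eval (t (Fin.succ i)) := by nlinarith
      obtain ⟨z, hz, hz0⟩ := intermediate_value_Ioo hab Q.continuousOn ⟨hA, hB⟩
      exact ⟨z, hz, hz0⟩
    · rw [hA, zero_mul] at hprod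
      exact absurd hprod (lt_irrefl 0)
    · have hB : Q.eval (t (Fin.succ i)) < 0 := by nlinarith
      obtain ⟨z, hz, hz0⟩ := intermediate_value_Ioo' hab Q.continuousOn ⟨hB, hA⟩
      exact ⟨z, hz, hz0⟩
  choose y hyIoo hy0 using hroots
  have hymono : StrictMono y := by
    intro i j hij
    have h1 : y i < t (Fin.succ i) := (hyIoo i).2
    have h2 : t (Fin.castSucc j) < y j := (hyIoo j).1
    have h3 : t (Fin.succ i) ≤ t (Fin.castSucc j) := by
      apply htmono.monotone
      rw [Fin.le_def, Fin.val_succ, Fin.coe_castSucc]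
      exact hij
    linarith
  have hcard : (Finset.image y Finset.univ).card = d + 1 := by
    rw [Finset.card_image_of_injective _ hymono.injective, Finset.card_univ, Fintype.card_fin]
  have hfinal := srr_of_points hQ0 (Finset.image y Finset.univ)
    (fun z hz => by obtain ⟨i, -, rfl⟩ := Finset.mem_image.1 hz; exact hy0 i)
    (by rw [hcard, hdeg])
  rw [hdeg] at hfinal
  exact hfinal


end Chamberland

open Polynomial Chamberland

theorem chamberland (n : ℕ) (hn : 2 ≤ n) (P : ℝ[X]) (hdeg : P.natDegree = n) :
    (P.roots.card = n ∧ P.roots.Nodup) ↔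
      ∀ j ∈ Finset.Icc 1 (n - 1), ∀ x : ℝ,
        ((derivative (derivative^[n - j - 1] P)).eval x) ^ 2 -
          (derivative^[n - j - 1] P).eval x *
            ((derivative (derivative (derivative^[n - j - 1] P))).eval x) > 0 := by
  constructor
  · rintro ⟨hcard, hnodup⟩ j hj x
    rw [Finset.mem_Icc] at hj
    have hiter : ∀ m, m ≤ n - 1 →
        (derivative^[m] P).natDegree = n - m ∧
        Multiset.card (derivative^[m] P).roots = n - m ∧ (derivative^[m] P).roots.Nodup := by
      intro m
      induction m with
      | zero => intro _; simpa using ⟨hdeg, hcard, hnodup⟩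
      | succ k ih =>
        intro hk
        obtain ⟨h1, h2, h3⟩ := ih (by omega)
        rw [Function.iterate_succ_apply']
        have hres := srr_derivative h1 (by omega) h2 h3
        rwa [show n - k - 1 = n - (k + 1) by omega] at hres
    obtain ⟨h1, h2, h3⟩ := hiter (n - j - 1) (by omega)
    have hnk : n - (n - j - 1) = j + 1 := by omega
    rw [hnk] at h1 h2
    set Q := derivative^[n - j - 1] P with hQdef
    have hQ0 : Q ≠ 0 := fun h0 => by rw [h0, natDegree_zero] at h1; omega
    have hlc : Q.leadingCoeff ≠ 0 := leadingCoeff_ne_zero.2 hQ0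
    have hfac := factored (Q := Q) (by rw [h2, h1]) h3
    have hne : Q.roots.toFinset.Nonempty := by
      rw [← Finset.card_pos, Multiset.toFinset_card_eq_card_iff_nodup.2 h3, h2]
      omega
    have hpos := wr_pos _ hlc _ hne x
    rw [← hfac] at hpos
    simpa [Wr] using hpos
  · intro h
    have hW : ∀ j, 1 ≤ j → j ≤ n - 1 → ∀ x, 0 < Wr (derivative^[n - j - 1] P) x := by
      intro j h1 h2 x
      simpa [Wr, gt_iff_lt] using h j (Finset.mem_Icc.2 ⟨h1, h2⟩) x
    have hclaim : ∀ j, j ≤ n - 1 →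
        Multiset.card (derivative^[n - 1 - j] P).roots = j + 1 ∧
          (derivative^[n - 1 - j] P).roots.Nodup := by
      intro j
      induction j with
      | zero =>
        intro _
        have hd1 : (derivative^[n - 1 - 0] P).natDegree = 1 := by
          rw [iterate_natDegree hdeg _ (by omega)]
          omega
        exact srr_linear hd1
      | succ k ih =>
        intro hk
        obtain ⟨h2, h3⟩ := ih (by omega)
        have hidx : n - 1 - k = (n - 1 - (k + 1)) + 1 := by omega
        rw [hidx, Function.iterate_succ_apply'] at h2 h3
        have hdq : (derivative^[n - 1 - (k + 1)] P).natDegree = (k + 1) + 1 := by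
          rw [iterate_natDegree hdeg _ (by omega)]
          omega
        have hWq : ∀ x, 0 < Wr (derivative^[n - 1 - (k + 1)] P) x := by
          intro x
          have hx := hW (k + 1) (by omega) hk x
          rwa [show n - (k + 1) - 1 = n - 1 - (k + 1) by omega] at hx
        exact step hdq h2 h3 hWq
    have hfin := hclaim (n - 1) le_rfl
    rw [show n - 1 - (n - 1) = 0 by omega] at hfin
    simp only [Function.iterate_zero, id_eq] at hfin
    rwa [show n - 1 + 1 = n by omega] at hfin
end

section
/- Let P be a real polynomial of degree n ≥ 2 whose zeros are all real and distinct. Then for every j ∈ {0, ..., n-1} and all real x, (P^{(j)})'(x)^2 - P^{(j)}(x) · (P^{(j)})''(x) > 0. -/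
open Polynomial

-- key identity
lemma key1 (t : Finset ℝ) (x : ℝ) (hx : ∀ r ∈ t, x ≠ r) :
    (derivative (∏ r ∈ t, (X - C r))).eval x ^ 2 -
      (∏ r ∈ t, (X - C r)).eval x *
        (derivative (derivative (∏ r ∈ t, (X - C r)))).eval x
      = (∏ r ∈ t, (X - C r)).eval x ^ 2 * ∑ r ∈ t, ((x - r)⁻¹) ^ 2 := by
  induction t using Finset.induction with
  | empty => simp
  | insert _ _ h ih =>
    rename_i r₀ t
    rw [Finset.prod_insert h, Finset.sum_insert h]
    have hu : x - r₀ ≠ 0 := sub_ne_zero.2 (hx r₀ (Finset.mem_insert_self _ _))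
    have hx' : ∀ r ∈ t, x ≠ r := fun r hr => hx r (Finset.mem_insert_of_mem hr)
    have ih' := ih hx'
    simp only [derivative_mul, derivative_sub, derivative_X, derivative_C, sub_zero, one_mul,
      derivative_add, eval_add, eval_mul, eval_sub, eval_X, eval_C] at ih' ⊢
    have hinv : (x - r₀) ^ 2 * ((x - r₀)⁻¹) ^ 2 = 1 := by field_simp
    linear_combination (x - r₀) ^ 2 * ih' - ((∏ r ∈ t, (X - C r)).eval x) ^ 2 * hinv

-- pointwise inequality for a scaled product of distinct linear factors
lemma key2 (t : Finset ℝ) (ht : t.Nonempty) (a : ℝ) (ha : a ≠ 0) (x : ℝ) :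
    (derivative (C a * ∏ r ∈ t, (X - C r))).eval x ^ 2 -
      (C a * ∏ r ∈ t, (X - C r)).eval x *
        (derivative (derivative (C a * ∏ r ∈ t, (X - C r)))).eval x > 0 := by
  have hderiv : derivative (C a * ∏ r ∈ t, (X - C r)) = C a * derivative (∏ r ∈ t, (X - C r)) := by
    rw [derivative_mul, derivative_C, zero_mul, zero_add]
  have hderiv2 : derivative (derivative (C a * ∏ r ∈ t, (X - C r)))
      = C a * derivative (derivative (∏ r ∈ t, (X - C r))) := by
    rw [hderiv, derivative_mul, derivative_C, zero_mul, zero_add]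
  rw [hderiv2, hderiv]
  simp only [eval_mul, eval_C]
  by_cases hx : ∀ r ∈ t, x ≠ r
  · have h1 := key1 t x hx
    have hne : (∏ r ∈ t, (X - C r)).eval x ≠ 0 := by
      rw [eval_prod]
      exact Finset.prod_ne_zero_iff.2 fun r hr => by
        simp only [eval_sub, eval_X, eval_C]; exact sub_ne_zero.2 (hx r hr)
    have hsum : (0 : ℝ) < ∑ r ∈ t, ((x - r)⁻¹) ^ 2 := by
      refine Finset.sum_pos (fun r hr => ?_) ht
      have : x - r ≠ 0 := sub_ne_zero.2 (hx r hr)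
      positivity
    have : (a * (derivative (∏ r ∈ t, (X - C r))).eval x) ^ 2 -
        a * (∏ r ∈ t, (X - C r)).eval x *
          (a * (derivative (derivative (∏ r ∈ t, (X - C r)))).eval x)
        = a ^ 2 * ((∏ r ∈ t, (X - C r)).eval x ^ 2 * ∑ r ∈ t, ((x - r)⁻¹) ^ 2) := by
      rw [← h1]; ring
    rw [this]
    positivity
  · push_neg at hx
    obtain ⟨r₀, hr₀, hxr⟩ := hx
    subst hxr
    have hz : (∏ r ∈ t, (X - C r)).eval x = 0 := by
      rw [eval_prod]
      exact Finset.prod_eq_zero hr₀ (by simp)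
    have hd : (derivative (∏ r ∈ t, (X - C r))).eval x ≠ 0 := by
      rw [← Finset.prod_erase_mul t _ hr₀, derivative_mul]
      have h1 : derivative (X - C x) = 1 := by
        rw [derivative_sub, derivative_X, derivative_C, sub_zero]
      rw [h1]
      simp only [eval_add, eval_mul, eval_sub, eval_X, eval_C, sub_self, mul_zero, eval_one,
        mul_one, zero_add]
      rw [eval_prod]
      refine Finset.prod_ne_zero_iff.2 fun r hr => ?_
      simp only [eval_sub, eval_X, eval_C]
      exact sub_ne_zero.2 (Ne.symm (Finset.ne_of_mem_erase hr))
    rw [hz, mul_zero, zero_mul, sub_zero]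
    have : a * (derivative (∏ r ∈ t, (X - C r))).eval x ≠ 0 := mul_ne_zero ha hd
    positivity

lemma step (p : ℝ[X]) (d : ℕ) (hd : 1 ≤ d) (hdeg : p.natDegree = d)
    (hcard : p.roots.card = d) (hnd : p.roots.Nodup) :
    (derivative p).natDegree = d - 1 ∧ (derivative p).roots.card = d - 1 ∧
      (derivative p).roots.Nodup := by
  have htf : p.roots.toFinset.card = d := by
    rw [Multiset.card_toFinset, Multiset.dedup_eq_self.2 hnd, hcard]
  have h1 := p.card_roots_toFinset_le_derivative
  have h2 : Multiset.card (derivative p).roots ≤ d - 1 :=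
    (card_roots' _).trans (by simpa [hdeg] using natDegree_derivative_le p)
  have h3 : (derivative p).roots.toFinset.card ≤ Multiset.card (derivative p).roots :=
    Multiset.toFinset_card_le _
  have hcard' : Multiset.card (derivative p).roots = d - 1 := by omega
  have htf' : (derivative p).roots.toFinset.card = Multiset.card (derivative p).roots := by
    omega
  have hnd' : (derivative p).roots.Nodup := by
    have : (derivative p).roots.dedup = (derivative p).roots := by
      refine Multiset.eq_of_le_of_card_le (Multiset.dedup_le _) ?_
      rw [Multiset.card_toFinset] at htf'
      omega
    rw [← this]
    exact Multiset.nodup_dedup _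
  refine ⟨le_antisymm ?_ ?_, hcard', hnd'⟩
  · simpa [hdeg] using natDegree_derivative_le p
  · rw [← hcard']; exact card_roots' _

theorem forward_direction (n : ℕ) (hn : 2 ≤ n) (P : ℝ[X]) (hdeg : P.natDegree = n)
    (hroots : P.roots.card = n ∧ P.roots.Nodup) :
    ∀ j < n, ∀ x : ℝ,
      ((derivative (derivative^[j] P)).eval x) ^ 2 -
        (derivative^[j] P).eval x *
          ((derivative (derivative (derivative^[j] P))).eval x) > 0 := by
  have main : ∀ j, j < n → (derivative^[j] P).natDegree = n - j ∧
      (derivative^[j] P).roots.card = n - j ∧ (derivative^[j] P).roots.Nodup := by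
    intro j
    induction j with
    | zero => intro _; simpa using ⟨hdeg, hroots.1, hroots.2⟩
    | succ k ih =>
      intro hk
      obtain ⟨h1, h2, h3⟩ := ih (by omega)
      rw [Function.iterate_succ_apply']
      have h := step _ (n - k) (by omega) h1 h2 h3
      have : n - k - 1 = n - (k + 1) := by omega
      rw [this] at h
      exact h
  intro j hj x
  obtain ⟨h1, h2, h3⟩ := main j hj
  set Q := derivative^[j] P with hQ
  have hQ0 : Q ≠ 0 := fun h => by rw [h] at h1; simp at h1; omega
  have ha : Q.leadingCoeff ≠ 0 := leadingCoeff_ne_zero.2 hQ0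
  have hrepr : Q = C Q.leadingCoeff * ∏ r ∈ Q.roots.toFinset, (X - C r) := by
    conv_lhs => rw [← C_leadingCoeff_mul_prod_multiset_X_sub_C (p := Q) (by rw [h1, h2])]
    congr 1
    rw [Finset.prod, Multiset.toFinset_val, Multiset.dedup_eq_self.2 h3]
  have ht : Q.roots.toFinset.Nonempty := by
    rw [← Finset.card_pos, Multiset.card_toFinset, Multiset.dedup_eq_self.2 h3, h2]
    omega
  rw [hrepr]
  exact key2 _ ht _ ha x
end

section
/- Let Q be a real polynomial of degree m ≥ 1 with all zeros real and distinct. Then for all real x, Q'(x)^2 - Q(x)·Q''(x) > 0. -/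
open Polynomial

private lemma aux_disc (s : Multiset ℝ) (hs : s.Nodup) (x : ℝ) :
    0 ≤ ((derivative ((s.map (fun a => X - C a)).prod)).eval x) ^ 2 -
        ((s.map (fun a => X - C a)).prod).eval x *
        ((derivative (derivative ((s.map (fun a => X - C a)).prod))).eval x) ∧
    (s ≠ 0 → 0 < ((derivative ((s.map (fun a => X - C a)).prod)).eval x) ^ 2 -
        ((s.map (fun a => X - C a)).prod).eval x *
        ((derivative (derivative ((s.map (fun a => X - C a)).prod))).eval x)) := by
  induction s using Multiset.induction_on with
  | empty => simp
  | cons r t ih =>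
    have hr : r ∉ t := (Multiset.nodup_cons.mp hs).1
    have ht : t.Nodup := (Multiset.nodup_cons.mp hs).2
    obtain ⟨ih0, _⟩ := ih ht
    set P : ℝ[X] := (t.map (fun a => X - C a)).prod with hP
    have hprod : ((r ::ₘ t).map (fun a => X - C a)).prod = (X - C r) * P := by
      simp [hP]
    have hd1 : derivative ((X - C r) * P) = P + (X - C r) * derivative P := by
      rw [derivative_mul]; simp
    have hd2 : derivative (derivative ((X - C r) * P)) =
        2 * derivative P + (X - C r) * derivative (derivative P) := by
      rw [hd1, derivative_add, derivative_mul]; simp; ring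
    set A := P.eval x with hA
    set B := (derivative P).eval x with hB
    set C2 := (derivative (derivative P)).eval x with hC
    have key : ((derivative (((r ::ₘ t).map (fun a => X - C a)).prod)).eval x) ^ 2 -
        (((r ::ₘ t).map (fun a => X - C a)).prod).eval x *
        ((derivative (derivative (((r ::ₘ t).map (fun a => X - C a)).prod))).eval x)
        = A ^ 2 + (x - r) ^ 2 * (B ^ 2 - A * C2) := by
      rw [hprod, hd2, hd1]
      simp only [eval_add, eval_mul, eval_sub, eval_X, eval_C, eval_ofNat]
      ring
    rw [key]
    have h1 : 0 ≤ A ^ 2 + (x - r) ^ 2 * (B ^ 2 - A * C2) := by positivity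
    refine ⟨h1, fun _ => ?_⟩
    rcases eq_or_ne t 0 with rfl | htne
    · have : P = 1 := by simp [hP]
      have : A = 1 := by rw [hA, this]; simp
      nlinarith [sq_nonneg (x - r)]
    · obtain ⟨_, ih1⟩ := ih ht
      have hpos := ih1 htne
      rcases eq_or_ne x r with hxr | hxr
      · have hAne : A ≠ 0 := by
          rw [hA, hP, eval_multiset_prod]
          rw [Multiset.map_map]
          apply Multiset.prod_ne_zero
          intro h0
          simp only [Multiset.mem_map] at h0
          obtain ⟨a, ha, ha0⟩ := h0
          simp only [Function.comp_apply, eval_sub, eval_X, eval_C, sub_eq_zero] at ha0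
          exact hr (by rw [← hxr, ha0]; exact ha)
        have : 0 < A ^ 2 := by positivity
        nlinarith [sq_nonneg (x - r), ih0]
      · have : 0 < (x - r) ^ 2 := by
          have : x - r ≠ 0 := sub_ne_zero.mpr hxr
          positivity
        nlinarith [sq_nonneg A]

theorem discriminant_pos (m : ℕ) (hm : 1 ≤ m) (Q : ℝ[X]) (hdeg : Q.natDegree = m)
    (hroots : Q.roots.card = m ∧ Q.roots.Nodup) :
    ∀ x : ℝ, ((derivative Q).eval x) ^ 2 - Q.eval x * ((derivative (derivative Q)).eval x) > 0 := by
  intro x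
  obtain ⟨hcard, hnodup⟩ := hroots
  have hQne : Q ≠ 0 := by
    intro h; rw [h] at hdeg; simp at hdeg; omega
  have hc : Q.leadingCoeff ≠ 0 := leadingCoeff_ne_zero.mpr hQne
  have hfact : C Q.leadingCoeff * (Q.roots.map (fun a => X - C a)).prod = Q := by
    apply C_leadingCoeff_mul_prod_multiset_X_sub_C
    rw [hcard, hdeg]
  set P : ℝ[X] := (Q.roots.map (fun a => X - C a)).prod with hP
  have hsne : Q.roots ≠ 0 := by
    intro h; rw [h] at hcard; simp at hcard; omega
  have hpos := (aux_disc Q.roots hnodup x).2 hsne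
  have h1 : derivative Q = C Q.leadingCoeff * derivative P := by
    conv_lhs => rw [← hfact]
    rw [derivative_C_mul]
  have h2 : derivative (derivative Q) = C Q.leadingCoeff * derivative (derivative P) := by
    rw [h1, derivative_C_mul]
  have h3 : Q.eval x = Q.leadingCoeff * P.eval x := by
    conv_lhs => rw [← hfact]
    simp only [eval_mul, eval_C]
  rw [h2, h1, h3]
  simp only [eval_mul, eval_C]
  have hc2 : 0 < Q.leadingCoeff ^ 2 := by positivity
  nlinarith [mul_pos hc2 hpos]
end

section
/- Let Q be a real polynomial of degree m ≥ 2 with positive leading coefficient, and suppose Q'(x)^2 - Q(x)·Q''(x) > 0 for all real x. If Q' has m-1 distinct real roots, then Q has m distinct real roots, and moreover the roots of Q' strictly interlace those of Q. -/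
open Polynomial

private lemma ivt_root (f : Polynomial ℝ) {a b : ℝ} (hab : a < b)
    (h : f.eval a * f.eval b < 0) : ∃ c, a < c ∧ c < b ∧ f.eval c = 0 := by
  have hc : ContinuousOn (fun x => f.eval x) (Set.Icc a b) := f.continuous.continuousOn
  rcases mul_neg_iff.1 h with ⟨ha, hb⟩ | ⟨ha, hb⟩
  · obtain ⟨c, hc1, hc2⟩ := intermediate_value_Ioo' hab.le hc (Set.mem_Ioo.2 ⟨hb, ha⟩)
    exact ⟨c, hc1.1, hc1.2, hc2⟩
  · obtain ⟨c, hc1, hc2⟩ := intermediate_value_Ioo hab.le hc (Set.mem_Ioo.2 ⟨ha, hb⟩)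
    exact ⟨c, hc1.1, hc1.2, hc2⟩

private lemma list_prod_neg (f : ℝ → ℝ) : ∀ (l : List ℝ), (∀ x ∈ l, f x < 0) →
    0 < (-1 : ℝ) ^ l.length * (l.map f).prod := by
  intro l
  induction l with
  | nil => intro _; simp
  | cons a l ih =>
    intro h
    have h1 := ih (fun x hx => h x (List.mem_cons_of_mem a hx))
    have h2 : f a < 0 := h a List.mem_cons_self
    have key : (-1 : ℝ) ^ (a :: l).length * ((a :: l).map f).prod
        = (-(f a)) * ((-1 : ℝ) ^ l.length * (l.map f).prod) := by
      simp [List.length_cons, pow_succ]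
      ring
    rw [key]
    exact mul_pos (by linarith) h1

theorem backward_step (m : ℕ) (hm : 2 ≤ m) (Q : ℝ[X]) (hdeg : Q.natDegree = m)
    (hlead : 0 < Q.leadingCoeff)
    (hineq : ∀ x : ℝ,
      ((derivative Q).eval x) ^ 2 - Q.eval x * ((derivative (derivative Q)).eval x) > 0)
    (hQ' : (derivative Q).roots.card = m - 1 ∧ (derivative Q).roots.Nodup) :
    (Q.roots.card = m ∧ Q.roots.Nodup) ∧
      ∀ i, i + 1 < m →
        (Q.roots.sort (· ≤ ·))[i]! < ((derivative Q).roots.sort (· ≤ ·))[i]! ∧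
          ((derivative Q).roots.sort (· ≤ ·))[i]! < (Q.roots.sort (· ≤ ·))[i + 1]! := by
  classical
  obtain ⟨hcard', hnodup'⟩ := hQ'
  have hQ0 : Q ≠ 0 := fun h => by simp [h] at hlead
  -- degree of Q'
  have hdegQ'deg : (derivative Q).degree = ((m - 1 : ℕ) : WithBot ℕ) := by
    rw [← hdeg]; exact degree_derivative_eq Q (by omega)
  have hdegQ' : (derivative Q).natDegree = m - 1 := natDegree_eq_of_degree_eq_some hdegQ'deg
  -- the sorted list of critical points
  set l' : List ℝ := (derivative Q).roots.sort (· ≤ ·) with hl'def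
  set N : ℕ := l'.length with hNdef
  have hNm : N = m - 1 := by rw [hNdef, hl'def, Multiset.length_sort, hcard']
  have hN1 : 1 ≤ N := by omega
  have hcoe : ((l' : Multiset ℝ)) = (derivative Q).roots := Multiset.sort_eq _ _
  have hl'sorted : l'.Pairwise (· ≤ ·) := Multiset.pairwise_sort _ _
  have hl'nodup : l'.Nodup := by
    rw [← Multiset.coe_nodup, hcoe]; exact hnodup'
  have hl'lt : l'.Pairwise (· < ·) := (hl'sorted.sortedLE.sortedLT_of_nodup hl'nodup).pairwise
  set t : ℕ → ℝ := fun i => l'[i]! with htdef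
  have htget : ∀ i (h : i < N), t i = l'[i] := fun i h => getElem!_pos l' i h
  have tmem : ∀ i, i < N → t i ∈ (derivative Q).roots := by
    intro i h
    rw [← hcoe, htget i h]
    exact_mod_cast List.getElem_mem h
  have troot : ∀ i, i < N → (derivative Q).eval (t i) = 0 := fun i h =>
    isRoot_of_mem_roots (tmem i h)
  have tmono : ∀ i j, i < j → j < N → t i < t j := by
    intro i j hij hj
    rw [htget i (by omega), htget j hj]
    exact List.pairwise_iff_getElem.1 hl'lt i j (by omega) hj hij
  -- leading coefficient of Q'
  set c0 : ℝ := (derivative Q).leadingCoeff with hc0def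
  have hc0 : 0 < c0 := by
    have h1 : c0 = Q.coeff (m - 1 + 1) * ((m - 1 : ℕ) + 1) := by
      rw [hc0def, leadingCoeff, hdegQ', coeff_derivative]
    have h2 : m - 1 + 1 = m := by omega
    rw [h1, h2]
    have h3 : Q.coeff m = Q.leadingCoeff := by rw [leadingCoeff, hdeg]
    rw [h3]
    have : (0 : ℝ) < ((m - 1 : ℕ) + 1 : ℝ) := by positivity
    exact mul_pos hlead this
  -- factorization of Q'
  have hfact : derivative Q
      = C c0 * (((derivative Q).roots).map fun a => X - C a).prod := by
    exact (C_leadingCoeff_mul_prod_multiset_X_sub_C (by rw [hcard', hdegQ'])).symm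
  -- value of Q'' at critical points
  have hQ''val : ∀ i, i < N →
      (derivative (derivative Q)).eval (t i)
        = c0 * ((((derivative Q).roots.erase (t i)).map fun a => t i - a).prod) := by
    intro i h
    conv_lhs => rw [hfact]
    rw [derivative_C_mul, eval_mul, eval_C,
      eval_multiset_prod_X_sub_C_derivative (tmem i h)]
  -- decomposition of the multiset of critical points around t i
  have hdecomp : ∀ i, i < N →
      (derivative Q).roots.erase (t i) = ↑(l'.take i ++ l'.drop (i + 1)) := by
    intro i h
    have hsp : l' = l'.take i ++ l'[i] :: l'.drop (i + 1) := by
      conv_lhs => rw [← List.take_append_drop i l']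
      rw [List.drop_eq_getElem_cons h]
    have hperm : l'.Perm (l'[i] :: (l'.take i ++ l'.drop (i + 1))) := by
      conv_lhs => rw [hsp]
      exact List.perm_middle
    have : (derivative Q).roots = (t i) ::ₘ ↑(l'.take i ++ l'.drop (i + 1)) := by
      rw [← hcoe, htget i h]
      exact_mod_cast Multiset.coe_eq_coe.2 hperm
    rw [this, Multiset.erase_cons_head]
  -- the elements before/after t i
  have hbefore : ∀ i, i < N → ∀ x ∈ l'.take i, x < t i := by
    intro i h x hx
    have hsp : l' = l'.take i ++ l'[i] :: l'.drop (i + 1) := by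
      conv_lhs => rw [← List.take_append_drop i l']
      rw [List.drop_eq_getElem_cons h]
    have hp := hl'lt
    rw [hsp] at hp
    have hp' := List.pairwise_append.1 hp
    rw [htget i h]
    exact hp'.2.2 x hx _ List.mem_cons_self
  have hafter : ∀ i, i < N → ∀ x ∈ l'.drop (i + 1), t i < x := by
    intro i h x hx
    have hsp : l' = l'.take i ++ l'[i] :: l'.drop (i + 1) := by
      conv_lhs => rw [← List.take_append_drop i l']
      rw [List.drop_eq_getElem_cons h]
    have hp := hl'lt
    rw [hsp] at hp
    have hp' := List.pairwise_append.1 hp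
    rw [htget i h]
    exact (List.pairwise_cons.1 hp'.2.1).1 x hx
  -- sign of Q'' at critical points
  have hQ''sign : ∀ i, i < N →
      0 < (-1 : ℝ) ^ (N - 1 - i) * (derivative (derivative Q)).eval (t i) := by
    intro i h
    rw [hQ''val i h, hdecomp i h]
    have hmapsplit :
        ((↑(l'.take i ++ l'.drop (i + 1)) : Multiset ℝ).map fun a => t i - a).prod
          = ((l'.take i).map fun a => t i - a).prod
            * ((l'.drop (i + 1)).map fun a => t i - a).prod := by
      rw [show ((↑(l'.take i ++ l'.drop (i + 1)) : Multiset ℝ).map fun a => t i - a)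
        = ↑(((l'.take i ++ l'.drop (i + 1))).map fun a => t i - a) from rfl]
      rw [show ((↑(((l'.take i ++ l'.drop (i + 1))).map fun a => t i - a) : Multiset ℝ)).prod
        = (((l'.take i ++ l'.drop (i + 1))).map fun a => t i - a).prod from rfl]
      rw [List.map_append, List.prod_append]
    rw [hmapsplit]
    have hP1 : 0 < ((l'.take i).map fun a => t i - a).prod := by
      apply List.prod_pos
      intro x hx
      obtain ⟨a, ha, rfl⟩ := List.mem_map.1 hx
      have := hbefore i h a ha
      linarith
    have hP2 : 0 < (-1 : ℝ) ^ (l'.drop (i + 1)).length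
        * ((l'.drop (i + 1)).map fun a => t i - a).prod := by
      apply list_prod_neg
      intro x hx
      have := hafter i h x hx
      linarith
    have hlen : (l'.drop (i + 1)).length = N - 1 - i := by
      rw [List.length_drop]; omega
    rw [hlen] at hP2
    nlinarith [mul_pos (mul_pos hc0 hP1) hP2]
  -- sign of Q at critical points
  have hQsign : ∀ i, i < N → (-1 : ℝ) ^ (N - 1 - i) * Q.eval (t i) < 0 := by
    intro i h
    have h1 := hQ''sign i h
    have h2 : Q.eval (t i) * (derivative (derivative Q)).eval (t i) < 0 := by
      have := hineq (t i)
      rw [troot i h] at this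
      nlinarith
    by_contra hcon
    push_neg at hcon
    have he2 : (-1 : ℝ) ^ (N - 1 - i) * (-1 : ℝ) ^ (N - 1 - i) = 1 := by
      rw [← pow_add]; exact Even.neg_one_pow ⟨N - 1 - i, rfl⟩
    nlinarith [mul_nonneg hcon h1.le]
  -- opposite signs at consecutive critical points
  have hQQ : ∀ i, i + 1 < N → Q.eval (t i) * Q.eval (t (i + 1)) < 0 := by
    intro i h
    set e : ℝ := (-1 : ℝ) ^ (N - 1 - (i + 1)) with hedef
    have he2 : e * e = 1 := by
      rw [hedef, ← pow_add]; exact Even.neg_one_pow ⟨N - 1 - (i + 1), rfl⟩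
    have s2 : e * Q.eval (t (i + 1)) < 0 := hQsign (i + 1) h
    have s1 : (-1 : ℝ) ^ (N - 1 - i) * Q.eval (t i) < 0 := hQsign i (by omega)
    have hs : (-1 : ℝ) ^ (N - 1 - i) = -e := by
      rw [hedef, show N - 1 - i = (N - 1 - (i + 1)) + 1 from by omega, pow_succ]; ring
    rw [hs] at s1
    have s1' : 0 < e * Q.eval (t i) := by nlinarith
    have key : Q.eval (t i) * Q.eval (t (i + 1))
        = (e * Q.eval (t i)) * (e * Q.eval (t (i + 1))) := by
      linear_combination (-(Q.eval (t i) * Q.eval (t (i + 1)))) * he2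
    rw [key]
    exact mul_neg_of_pos_of_neg s1' s2
  -- roots in middle intervals
  have exmid : ∀ i, i + 1 < N → ∃ c, t i < c ∧ c < t (i + 1) ∧ Q.eval c = 0 := by
    intro i h
    exact ivt_root Q (tmono i (i + 1) (by omega) h) (hQQ i h)
  -- root in the last interval
  have hQlast : Q.eval (t (N - 1)) < 0 := by
    have := hQsign (N - 1) (by omega)
    rw [show N - 1 - (N - 1) = 0 from by omega, pow_zero, one_mul] at this
    exact this
  have exlast : ∃ c, t (N - 1) < c ∧ Q.eval c = 0 := by
    have hdegpos : 0 < Q.degree := natDegree_pos_iff_degree_pos.1 (by omega)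
    have tend := tendsto_atTop_of_leadingCoeff_nonneg Q hdegpos hlead.le
    obtain ⟨b, hb1, hb2⟩ :=
      ((tend.eventually_gt_atTop 0).and (Filter.eventually_gt_atTop (t (N - 1)))).exists
    obtain ⟨c, hc1, _, hc3⟩ := ivt_root Q hb2 (mul_neg_of_neg_of_pos hQlast hb1)
    exact ⟨c, hc1, hc3⟩
  -- root in the first interval
  have ex0 : ∃ c, c < t 0 ∧ Q.eval c = 0 := by
    set R : ℝ[X] := C ((-1 : ℝ) ^ m) * Q.comp (-X) with hRdef
    have hsq : ((-1 : ℝ) ^ m) * ((-1 : ℝ) ^ m) = 1 := by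
      rw [← pow_add]; exact Even.neg_one_pow ⟨m, rfl⟩
    have hXdeg : (-X : ℝ[X]).natDegree = 1 := by
      rw [natDegree_neg, natDegree_X]
    have hRlc : R.leadingCoeff = Q.leadingCoeff := by
      rw [hRdef, leadingCoeff_mul, leadingCoeff_C,
        leadingCoeff_comp (by rw [hXdeg]; omega), hdeg]
      have : (-X : ℝ[X]).leadingCoeff = -1 := by simp
      rw [this]
      rcases Nat.even_or_odd m with he | ho
      · rw [he.neg_one_pow]; ring
      · rw [ho.neg_one_pow]; ring
    have hRne : R ≠ 0 := by
      intro hcon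
      rw [hcon, leadingCoeff_zero] at hRlc
      exact hlead.ne (hRlc)
    have hRdeg : R.natDegree = m := by
      rw [hRdef, natDegree_C_mul (by positivity), natDegree_comp, hXdeg, hdeg, mul_one]
    have hRdegpos : 0 < R.degree := natDegree_pos_iff_degree_pos.1 (by omega)
    have tendR := tendsto_atTop_of_leadingCoeff_nonneg R hRdegpos (by rw [hRlc]; exact hlead.le)
    obtain ⟨x, hx1, hx2⟩ :=
      ((tendR.eventually_gt_atTop 0).and (Filter.eventually_gt_atTop (-(t 0)))).exists
    have hevalR : R.eval x = (-1 : ℝ) ^ m * Q.eval (-x) := by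
      rw [hRdef, eval_mul, eval_C, eval_comp, eval_neg, eval_X]
    rw [hevalR] at hx1
    have ha : -x < t 0 := by linarith
    have h2 : (-1 : ℝ) ^ m * Q.eval (t 0) < 0 := by
      have := hQsign 0 (by omega)
      rw [Nat.sub_zero] at this
      have hpow : (-1 : ℝ) ^ (N - 1) = (-1 : ℝ) ^ m := by
        rw [show m = (N - 1) + 2 from by omega, pow_add]
        norm_num
      rw [hpow] at this
      exact this
    have key : Q.eval (-x) * Q.eval (t 0)
        = ((-1 : ℝ) ^ m * Q.eval (-x)) * ((-1 : ℝ) ^ m * Q.eval (t 0)) := by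
      linear_combination (-(Q.eval (-x) * Q.eval (t 0))) * hsq
    obtain ⟨c, _, hc2, hc3⟩ := ivt_root Q ha (by rw [key]; exact mul_neg_of_pos_of_neg hx1 h2)
    exact ⟨c, hc2, hc3⟩
  -- choose the roots
  set u : ℕ → ℝ := fun j =>
    if h0 : j = 0 then ex0.choose
    else if hj : j < N then (exmid (j - 1) (by omega)).choose
    else exlast.choose with hudef
  have huroot : ∀ j, j ≤ N → Q.eval (u j) = 0 := by
    intro j hj
    simp only [hudef]
    split_ifs with h0 hjN
    · exact ex0.choose_spec.2
    · exact (exmid (j - 1) (by omega)).choose_spec.2.2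
    · exact exlast.choose_spec.2
  have hu_lt_t : ∀ j, j < N → u j < t j := by
    intro j hj
    simp only [hudef]
    by_cases h0 : j = 0
    · subst h0; rw [dif_pos rfl]; exact ex0.choose_spec.1
    · rw [dif_neg h0, dif_pos hj]
      have h1 := (exmid (j - 1) (by omega)).choose_spec.2.1
      have h2 : t (j - 1 + 1) = t j := by rw [show j - 1 + 1 = j from by omega]
      exact lt_of_lt_of_eq h1 h2
  have ht_lt_u : ∀ j, j < N → t j < u (j + 1) := by
    intro j hj
    simp only [hudef]
    rw [dif_neg (Nat.succ_ne_zero j)]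
    by_cases hjN : j + 1 < N
    · rw [dif_pos hjN]
      have := (exmid (j + 1 - 1) (by omega)).choose_spec.1
      exact this
    · rw [dif_neg hjN]
      have h1 := exlast.choose_spec.1
      have h2 : t (N - 1) = t j := by rw [show N - 1 = j from by omega]
      exact lt_of_lt_of_eq (lt_of_eq_of_lt h2.symm h1) rfl
  have huadj : ∀ j, j < N → u j < u (j + 1) := fun j hj =>
    lt_trans (hu_lt_t j hj) (ht_lt_u j hj)
  have humono : ∀ a b, a < b → b ≤ N → u a < u b := by
    intro a b hab hbN
    induction b with
    | zero => omega
    | succ k ih =>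
      rcases Nat.lt_or_ge a k with h | h
      · exact lt_trans (ih h (by omega)) (huadj k (by omega))
      · have : a = k := by omega
        subst this
        exact huadj a (by omega)
  -- the list of roots of Q
  set L : List ℝ := (List.range (N + 1)).map u with hLdef
  have hLlen : L.length = m := by
    rw [hLdef, List.length_map, List.length_range]; omega
  have hLget : ∀ k (hk : k < L.length), L[k] = u k := by
    intro k hk
    simp only [hLdef, List.getElem_map, List.getElem_range]
  have hLsortedlt : L.Pairwise (· < ·) := by
    apply List.pairwise_iff_getElem.2
    intro i j hi hj hij
    rw [hLget i hi, hLget j hj]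
    have hj' : j < N + 1 := by rw [hLlen] at hj; omega
    exact humono i j hij (by omega)
  have hLnodup : L.Nodup := hLsortedlt.imp ne_of_lt
  have hLsortedle : L.Pairwise (· ≤ ·) := hLsortedlt.imp le_of_lt
  have hLsub : (↑L : Multiset ℝ) ≤ Q.roots := by
    rw [Multiset.le_iff_subset (by exact_mod_cast hLnodup)]
    intro x hx
    rw [Multiset.mem_coe, hLdef] at hx
    obtain ⟨j, hj, rfl⟩ := List.mem_map.1 hx
    rw [mem_roots hQ0]
    exact huroot j (by have := List.mem_range.1 hj; omega)
  have hcardL : Multiset.card (↑L : Multiset ℝ) = m := by simpa using hLlen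
  have hrootseq : Q.roots = ↑L := by
    refine (Multiset.eq_of_le_of_card_le hLsub ?_).symm
    rw [hcardL, ← hdeg]
    exact Q.card_roots'
  have hcardQ : Multiset.card Q.roots = m := by rw [hrootseq, hcardL]
  have hnodupQ : Q.roots.Nodup := by rw [hrootseq]; exact_mod_cast hLnodup
  have hsortQ : Q.roots.sort (· ≤ ·) = L := by
    refine List.Perm.eq_of_pairwise' (Q.roots.pairwise_sort _) hLsortedle ?_
    rw [← Multiset.coe_eq_coe, Multiset.sort_eq, hrootseq]
  refine ⟨⟨hcardQ, hnodupQ⟩, ?_⟩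
  intro i hi
  have hiN : i < N := by omega
  have hgetQ : ∀ k, k < N + 1 → (Q.roots.sort (· ≤ ·))[k]! = u k := by
    intro k hk
    have hkL : k < L.length := by omega
    rw [hsortQ, getElem!_pos L k hkL]
    exact hLget k hkL
  constructor
  · rw [hgetQ i (by omega)]
    exact hu_lt_t i hiN
  · rw [hgetQ (i + 1) (by omega)]
    exact ht_lt_u i hiN
end

section
/- Let P and Q be real polynomials with deg P = deg Q + 1, both with positive leading coefficients, such that P'(x)Q(x) - Q'(x)P(x) > 0 for all real x. If Q has all real and distinct roots, then between any two consecutive roots of Q there lies at least one root of P. -/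
open Polynomial Set Filter Topology

private lemma deriv_sign_left (Q : ℝ[X]) (a b : ℝ) (hab : a < b) (hQa : Q.eval a = 0)
    (hpos : ∀ x ∈ Set.Ioo a b, 0 < Q.eval x) : 0 ≤ (derivative Q).eval a := by
  have hd := (Q.hasDerivAt a)
  have hs := hasDerivAt_iff_tendsto_slope.mp hd
  have hmono : Tendsto (slope (fun y => Q.eval y) a) (𝓝[Set.Ioo a b] a)
      (𝓝 ((derivative Q).eval a)) :=
    hs.mono_left (nhdsWithin_mono a (fun x hx => ne_of_gt hx.1))
  have : Filter.NeBot (𝓝[Set.Ioo a b] a) := left_nhdsWithin_Ioo_neBot hab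
  refine ge_of_tendsto hmono ?_
  filter_upwards [self_mem_nhdsWithin] with x hx
  have h1 : 0 < Q.eval x := hpos x hx
  have h2 : 0 < x - a := sub_pos.mpr hx.1
  have : (0:ℝ) ≤ (Q.eval x - Q.eval a) / (x - a) :=
    div_nonneg (by rw [hQa]; linarith) h2.le
  simpa [slope_def_field, div_eq_inv_mul] using this

private lemma deriv_sign_right (Q : ℝ[X]) (a b : ℝ) (hab : a < b) (hQb : Q.eval b = 0)
    (hpos : ∀ x ∈ Set.Ioo a b, 0 < Q.eval x) : (derivative Q).eval b ≤ 0 := by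
  have hd := (Q.hasDerivAt b)
  have hs := hasDerivAt_iff_tendsto_slope.mp hd
  have hmono : Tendsto (slope (fun y => Q.eval y) b) (𝓝[Set.Ioo a b] b)
      (𝓝 ((derivative Q).eval b)) :=
    hs.mono_left (nhdsWithin_mono b (fun x hx => ne_of_lt hx.2))
  have : Filter.NeBot (𝓝[Set.Ioo a b] b) := right_nhdsWithin_Ioo_neBot hab
  refine le_of_tendsto hmono ?_
  filter_upwards [self_mem_nhdsWithin] with x hx
  have h1 : 0 < Q.eval x := hpos x hx
  have h2 : x - b < 0 := sub_neg.mpr hx.2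
  have : (Q.eval x - Q.eval b) / (x - b) ≤ 0 :=
    div_nonpos_of_nonneg_of_nonpos (by rw [hQb]; linarith) h2.le
  simpa [slope_def_field, div_eq_inv_mul] using this

private lemma key_lemma (P Q : ℝ[X]) (a b : ℝ) (hab : a < b)
    (hQa : Q.eval a = 0) (hQb : Q.eval b = 0)
    (hpos : ∀ x ∈ Set.Ioo a b, 0 < Q.eval x)
    (hWa : (derivative P).eval a * Q.eval a - (derivative Q).eval a * P.eval a > 0)
    (hWb : (derivative P).eval b * Q.eval b - (derivative Q).eval b * P.eval b > 0) :
    ∃ x : ℝ, a < x ∧ x < b ∧ P.eval x = 0 := by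
  rw [hQa] at hWa
  rw [hQb] at hWb
  have hda : 0 ≤ (derivative Q).eval a := deriv_sign_left Q a b hab hQa hpos
  have hdb : (derivative Q).eval b ≤ 0 := deriv_sign_right Q a b hab hQb hpos
  have hPa : P.eval a < 0 := by nlinarith
  have hPb : 0 < P.eval b := by nlinarith
  have hc : ContinuousOn (fun x => P.eval x) (Set.Icc a b) :=
    (Polynomial.continuous P).continuousOn
  have h0 : (0:ℝ) ∈ Set.Ioo (P.eval a) (P.eval b) := ⟨hPa, hPb⟩
  have := intermediate_value_Ioo hab.le hc h0
  obtain ⟨x, hx, hPx⟩ := this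
  exact ⟨x, hx.1, hx.2, hPx⟩

theorem root_between (m : ℕ) (hm : 2 ≤ m) (P Q : ℝ[X])
    (hdegP : P.natDegree = m) (hdegQ : Q.natDegree = m - 1)
    (hPlead : 0 < P.leadingCoeff) (hQlead : 0 < Q.leadingCoeff)
    (hW : ∀ x : ℝ, (derivative P).eval x * Q.eval x - (derivative Q).eval x * P.eval x > 0)
    (hQroots : Q.roots.card = m - 1 ∧ Q.roots.Nodup) :
    ∀ a b : ℝ, a ∈ Q.roots → b ∈ Q.roots → a < b →
      (∀ c ∈ Q.roots, c ≤ a ∨ b ≤ c) →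
      ∃ x : ℝ, a < x ∧ x < b ∧ P.eval x = 0 := by
  intro a b ha hb hab hcons
  have hQne : Q ≠ 0 := fun h => by simp [h] at hQlead
  have hQa : Q.eval a = 0 := (Polynomial.mem_roots hQne).mp ha
  have hQb : Q.eval b = 0 := (Polynomial.mem_roots hQne).mp hb
  -- Q does not vanish on (a,b)
  have hnz : ∀ x ∈ Set.Ioo a b, Q.eval x ≠ 0 := by
    intro x hx hx0
    have hxr : x ∈ Q.roots := (Polynomial.mem_roots hQne).mpr hx0
    rcases hcons x hxr with h | h
    · exact absurd h (not_le.mpr hx.1)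
    · exact absurd h (not_le.mpr hx.2)
  -- Q has constant sign on (a,b); look at the midpoint
  set t := (a + b) / 2 with ht
  have htmem : t ∈ Set.Ioo a b := ⟨by simp [ht]; linarith, by simp [ht]; linarith⟩
  have hQt := hnz t htmem
  have hcQ : ContinuousOn (fun x => Q.eval x) (Set.Icc a b) :=
    (Polynomial.continuous Q).continuousOn
  have hconst : (∀ x ∈ Set.Ioo a b, 0 < Q.eval x) ∨ (∀ x ∈ Set.Ioo a b, Q.eval x < 0) := by
    rcases lt_or_gt_of_ne hQt with hneg | hposn
    · right
      intro x hx
      by_contra hge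
      have hx0 : 0 < Q.eval x := lt_of_le_of_ne (not_lt.mp hge) (Ne.symm (hnz x hx))
      rcases lt_trichotomy x t with hxt | hxt | hxt
      · have hc' : ContinuousOn (fun y => Q.eval y) (Set.Icc x t) :=
          (Polynomial.continuous Q).continuousOn
        have h0 : (0:ℝ) ∈ Set.Ioo (Q.eval t) (Q.eval x) := ⟨hneg, hx0⟩
        obtain ⟨c, hc, hQc⟩ := intermediate_value_Ioo' hxt.le hc' h0
        exact hnz c ⟨lt_trans hx.1 hc.1, lt_trans hc.2 htmem.2⟩ hQc
      · rw [hxt] at hx0; linarith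
      · have hc' : ContinuousOn (fun y => Q.eval y) (Set.Icc t x) :=
          (Polynomial.continuous Q).continuousOn
        have h0 : (0:ℝ) ∈ Set.Ioo (Q.eval t) (Q.eval x) := ⟨hneg, hx0⟩
        obtain ⟨c, hc, hQc⟩ := intermediate_value_Ioo hxt.le hc' h0
        exact hnz c ⟨lt_trans htmem.1 hc.1, lt_trans hc.2 hx.2⟩ hQc
    · left
      intro x hx
      by_contra hge
      have hx0 : Q.eval x < 0 := lt_of_le_of_ne (not_lt.mp hge) (hnz x hx)
      rcases lt_trichotomy x t with hxt | hxt | hxt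
      · have hc' : ContinuousOn (fun y => Q.eval y) (Set.Icc x t) :=
          (Polynomial.continuous Q).continuousOn
        have h0 : (0:ℝ) ∈ Set.Ioo (Q.eval x) (Q.eval t) := ⟨hx0, hposn⟩
        obtain ⟨c, hc, hQc⟩ := intermediate_value_Ioo hxt.le hc' h0
        exact hnz c ⟨lt_trans hx.1 hc.1, lt_trans hc.2 htmem.2⟩ hQc
      · rw [hxt] at hx0; linarith
      · have hc' : ContinuousOn (fun y => Q.eval y) (Set.Icc t x) :=
          (Polynomial.continuous Q).continuousOn
        have h0 : (0:ℝ) ∈ Set.Ioo (Q.eval x) (Q.eval t) := ⟨hx0, hposn⟩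
        obtain ⟨c, hc, hQc⟩ := intermediate_value_Ioo' hxt.le hc' h0
        exact hnz c ⟨lt_trans htmem.1 hc.1, lt_trans hc.2 hx.2⟩ hQc
  rcases hconst with hpos | hneg
  · exact key_lemma P Q a b hab hQa hQb hpos (hW a) (hW b)
  · -- apply the key lemma to -P and -Q
    have hpos' : ∀ x ∈ Set.Ioo a b, 0 < (-Q).eval x := by
      intro x hx; simpa using hneg x hx
    have hQa' : (-Q).eval a = 0 := by simp [hQa]
    have hQb' : (-Q).eval b = 0 := by simp [hQb]
    have hWa' : (derivative (-P)).eval a * (-Q).eval a -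
        (derivative (-Q)).eval a * (-P).eval a > 0 := by
      have := hW a; simp only [derivative_neg, eval_neg]; nlinarith
    have hWb' : (derivative (-P)).eval b * (-Q).eval b -
        (derivative (-Q)).eval b * (-P).eval b > 0 := by
      have := hW b; simp only [derivative_neg, eval_neg]; nlinarith
    obtain ⟨x, h1, h2, h3⟩ := key_lemma (-P) (-Q) a b hab hQa' hQb' hpos' hWa' hWb'
    exact ⟨x, h1, h2, by simpa using h3⟩
end

section
/- Let P and Q be real polynomials with positive leading coefficients and deg P = deg Q + 1 ≥ 2, such that P'(x)Q(x) - Q'(x)P(x) > 0 for all real x. If Q has all real and distinct roots, then P has all real and distinct roots, and the roots of Q strictly interlace those of P. -/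
open Polynomial Filter

private lemma neg_one_pow_eq (k : ℕ) : (-1:ℝ)^k = 1 ∨ (-1:ℝ)^k = -1 := by
  rcases Nat.even_or_odd k with h | h
  · left; exact Even.neg_one_pow h
  · right; exact Odd.neg_one_pow h

private lemma neg_list_prod_sign : ∀ (l : List ℝ), (∀ x ∈ l, x < 0) →
    0 < (-1:ℝ)^l.length * l.prod := by
  intro l
  induction l with
  | nil => simp
  | cons a t ih =>
    intro h
    have ht := ih (fun x hx => h x (List.mem_cons_of_mem a hx))
    have ha := h a List.mem_cons_self
    simp only [List.length_cons, List.prod_cons, pow_succ]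
    rcases neg_one_pow_eq t.length with h1 | h1 <;> rw [h1] at ht ⊢ <;> nlinarith

private lemma exists_root_between (P : ℝ[X]) {a b : ℝ} (hab : a < b)
    (h : P.eval a * P.eval b < 0) : ∃ x, a < x ∧ x < b ∧ P.eval x = 0 := by
  have hc : ContinuousOn (fun x => P.eval x) (Set.Icc a b) := P.continuous.continuousOn
  rcases lt_or_ge (P.eval a) 0 with ha | ha
  · have hb : (0:ℝ) < P.eval b := by nlinarith
    obtain ⟨x, hx, hxe⟩ := intermediate_value_Ioo hab.le hc ⟨ha, hb⟩
    exact ⟨x, hx.1, hx.2, hxe⟩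
  · have ha' : (0:ℝ) < P.eval a := by
      rcases eq_or_lt_of_le ha with h0 | h0
      · exfalso; rw [← h0] at h; simp at h
      · exact h0
    have hb : P.eval b < 0 := by nlinarith
    obtain ⟨x, hx, hxe⟩ := intermediate_value_Ioo' hab.le hc ⟨hb, ha'⟩
    exact ⟨x, hx.1, hx.2, hxe⟩

private lemma deriv_sign_aux (c x : ℝ) (hc : 0 < c) (tk dr : List ℝ)
    (htk : ∀ a ∈ tk, a < x) (hdr : ∀ a ∈ dr, x < a) (Q : ℝ[X])
    (hQ : Q = C c * ((tk ++ x :: dr).map fun a => X - C a).prod) :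
    0 < (-1:ℝ)^dr.length * (derivative Q).eval x := by
  set u : ℝ[X] := C c * ((tk.map fun a => X - C a).prod * (dr.map fun a => X - C a).prod)
    with hu
  have hQu : Q = (X - C x) * u := by
    rw [hQ, List.map_append, List.map_cons, List.prod_append, List.prod_cons, hu]
    ring
  have hder : (derivative Q).eval x = u.eval x := by
    rw [hQu, derivative_mul]
    simp
  have hueval : u.eval x = c * ((tk.map fun a => x - a).prod * (dr.map fun a => x - a).prod) := by
    rw [hu]
    simp [eval_list_prod, List.map_map, Function.comp_def]
  have hT : 0 < (tk.map fun a => x - a).prod := by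
    apply List.prod_pos
    intro y hy
    obtain ⟨a, ha, rfl⟩ := List.mem_map.mp hy
    have := htk a ha; linarith
  have hD : 0 < (-1:ℝ)^dr.length * (dr.map fun a => x - a).prod := by
    have := neg_list_prod_sign (dr.map fun a => x - a) ?_
    · rwa [List.length_map] at this
    · intro y hy
      obtain ⟨a, ha, rfl⟩ := List.mem_map.mp hy
      have := hdr a ha; linarith
  rw [hder, hueval]
  rcases neg_one_pow_eq dr.length with h1 | h1 <;> rw [h1] at hD ⊢ <;>
    nlinarith [mul_pos hc hT]

private lemma sign_flip (k : ℕ) (d p : ℝ) (h1 : 0 < (-1:ℝ)^k * d) (h2 : d * p < 0) :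
    0 < (-1:ℝ)^(k+1) * p := by
  rw [pow_succ]
  rcases neg_one_pow_eq k with h | h <;> rw [h] at h1 ⊢ <;> nlinarith

theorem wronskian_interlacing (m : ℕ) (hm : 2 ≤ m) (P Q : ℝ[X])
    (hdegP : P.natDegree = m) (hdegQ : Q.natDegree = m - 1)
    (hPlead : 0 < P.leadingCoeff) (hQlead : 0 < Q.leadingCoeff)
    (hW : ∀ x : ℝ, (derivative P).eval x * Q.eval x - (derivative Q).eval x * P.eval x > 0)
    (hQroots : Q.roots.card = m - 1 ∧ Q.roots.Nodup) :
    (P.roots.card = m ∧ P.roots.Nodup) ∧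
      ∀ i, i + 1 < m →
        (P.roots.sort (· ≤ ·))[i]! < (Q.roots.sort (· ≤ ·))[i]! ∧
          (Q.roots.sort (· ≤ ·))[i]! < (P.roots.sort (· ≤ ·))[i + 1]! := by
  have hPne : P ≠ 0 := fun h => by simp [h] at hPlead
  have hQne : Q ≠ 0 := fun h => by simp [h] at hQlead
  set L : List ℝ := Q.roots.sort (· ≤ ·) with hLdef
  have hLcoe : (↑L : Multiset ℝ) = Q.roots := by rw [hLdef]; exact Multiset.sort_eq _ _
  have hLsorted : L.Pairwise (· ≤ ·) := by rw [hLdef]; exact Multiset.pairwise_sort _ _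
  clear_value L
  have hLlen : L.length = m - 1 := by
    have := congrArg Multiset.card hLcoe
    simpa [hQroots.1] using this
  have hLnodup : L.Nodup := by
    have := hQroots.2
    rw [← hLcoe] at this
    exact this
  have hLpair : L.Pairwise (· < ·) := by
    rcases List.Pairwise.and hLsorted hLnodup with hp
    exact hp.imp fun h => lt_of_le_of_ne h.1 h.2
  have hstrict : ∀ i j (hi : i < L.length) (hj : j < L.length), i < j → L[i] < L[j] :=
    fun i j hi hj hij => List.pairwise_iff_getElem.mp hLpair i j hi hj hij
  set s : ℕ → ℝ := fun i => L[i]! with hsdef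
  have hs : ∀ i (h : i < m - 1), s i = L[i]'(by omega) := by
    intro i h
    exact getElem!_pos L i (by omega)
  have hsmono : ∀ i j, i < j → j < m - 1 → s i < s j := by
    intro i j hij hj
    rw [hs i (by omega), hs j hj]
    exact hstrict i j (by omega) (by omega) hij
  have hsroot : ∀ i, i < m - 1 → Q.eval (s i) = 0 := by
    intro i hi
    have hmem : s i ∈ L := by rw [hs i hi]; exact List.getElem_mem _
    have : s i ∈ (↑L : Multiset ℝ) := by exact_mod_cast hmem
    rw [hLcoe] at this
    exact isRoot_of_mem_roots this
  -- sign of Q' at the roots of Q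
  have hQ'sign : ∀ i, i < m - 1 → 0 < (-1:ℝ)^(m-2-i) * (derivative Q).eval (s i) := by
    intro i hi
    have hiL : i < L.length := by omega
    have hsplit : L = L.take i ++ L[i] :: L.drop (i+1) := by
      rw [List.getElem_cons_drop, List.take_append_drop]
    have hp2 : (L.take i ++ L[i] :: L.drop (i+1)).Pairwise (· < ·) := hsplit ▸ hLpair
    rw [List.pairwise_append] at hp2
    obtain ⟨_, hp3, hp4⟩ := hp2
    rw [List.pairwise_cons] at hp3
    have hfact : Q = C Q.leadingCoeff * (Q.roots.map fun a => X - C a).prod :=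
      (C_leadingCoeff_mul_prod_multiset_X_sub_C (by rw [hQroots.1, hdegQ])).symm
    rw [← hLcoe] at hfact
    have hfact2 : Q = C Q.leadingCoeff
        * (((L.take i ++ L[i] :: L.drop (i+1)).map fun a => X - C a) : List ℝ[X]).prod := by
      conv_lhs => rw [hfact]
      rw [← hsplit]
      norm_cast
    have haux := deriv_sign_aux Q.leadingCoeff (L[i]'hiL) hQlead (L.take i) (L.drop (i+1))
      (fun a ha => hp4 a ha (L[i]'hiL) List.mem_cons_self)
      (fun a ha => hp3.1 a ha) Q hfact2
    rw [List.length_drop, hLlen] at haux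
    have hexp : m - 1 - (i+1) = m - 2 - i := by omega
    rw [hexp] at haux
    rw [hs i hi]
    exact haux
  -- sign of P at the roots of Q
  have hsign : ∀ i, i < m - 1 → 0 < (-1:ℝ)^(m-1-i) * P.eval (s i) := by
    intro i hi
    have hWs := hW (s i)
    rw [hsroot i hi] at hWs
    have hWs2 : (derivative Q).eval (s i) * P.eval (s i) < 0 := by linarith
    have := sign_flip (m-2-i) _ _ (hQ'sign i hi) hWs2
    have hexp : m - 1 - i = (m - 2 - i) + 1 := by omega
    rw [hexp]
    exact this
  -- roots of P between consecutive roots of Q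
  have hmid : ∀ i, i + 1 < m - 1 → ∃ x, s i < x ∧ x < s (i+1) ∧ P.eval x = 0 := by
    intro i hi
    have h1 := hsign i (by omega)
    have h2 := hsign (i+1) hi
    have hexp : m - 1 - i = (m - 1 - (i+1)) + 1 := by omega
    rw [hexp, pow_succ] at h1
    have hprod : P.eval (s i) * P.eval (s (i+1)) < 0 := by
      rcases neg_one_pow_eq (m-1-(i+1)) with h | h <;> rw [h] at h1 h2 <;> nlinarith
    exact exists_root_between P (hsmono i (i+1) (by omega) hi) hprod
  have hdegPpos : 0 < P.degree := by
    rw [← natDegree_pos_iff_degree_pos, hdegP]; omega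
  -- root of P above the largest root of Q
  have htoproot : ∃ x, s (m-2) < x ∧ P.eval x = 0 := by
    have h1 := hsign (m-2) (by omega)
    have hexp : m - 1 - (m-2) = 1 := by omega
    rw [hexp, pow_one] at h1
    have htt : Tendsto (fun x : ℝ => eval x P) atTop atTop :=
      P.tendsto_atTop_of_leadingCoeff_nonneg hdegPpos hPlead.le
    obtain ⟨b, hb1, hb2⟩ :=
      ((htt.eventually_gt_atTop 0).and (eventually_gt_atTop (s (m-2)))).exists
    obtain ⟨x, hx1, hx2, hx3⟩ := exists_root_between P hb2 (by nlinarith)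
    exact ⟨x, hx1, hx3⟩
  -- root of P below the smallest root of Q
  have hbotroot : ∃ x, x < s 0 ∧ P.eval x = 0 := by
    have h1 := hsign 0 (by omega)
    simp only [Nat.sub_zero] at h1
    set R : ℝ[X] := C ((-1:ℝ)^m) * P.comp (-X) with hR
    have hXne : ((-X : ℝ[X])).natDegree ≠ 0 := by simp
    have hm1 : ((-1:ℝ)^m) * ((-1:ℝ)^m) = 1 := by
      rw [← pow_add]; exact Even.neg_one_pow ⟨m, rfl⟩
    have hRlead : R.leadingCoeff = P.leadingCoeff := by
      rw [hR, leadingCoeff_mul, leadingCoeff_C, leadingCoeff_comp hXne]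
      have hx : ((-X : ℝ[X])).leadingCoeff = -1 := by simp
      rw [hx, hdegP]
      nlinarith [hm1]
    have hRdeg : R.natDegree = m := by
      rw [hR, natDegree_C_mul (by positivity : ((-1:ℝ)^m) ≠ 0), natDegree_comp]
      simp [hdegP]
    have hRdegpos : 0 < R.degree := by
      rw [← natDegree_pos_iff_degree_pos, hRdeg]; omega
    have htt : Tendsto (fun x : ℝ => eval x R) atTop atTop :=
      R.tendsto_atTop_of_leadingCoeff_nonneg hRdegpos (by rw [hRlead]; exact hPlead.le)
    obtain ⟨y, hy1, hy2⟩ :=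
      ((htt.eventually_gt_atTop 0).and (eventually_gt_atTop (-(s 0)))).exists
    have hyv : eval y R = (-1:ℝ)^m * P.eval (-y) := by
      rw [hR]; simp [eval_comp]
    rw [hyv] at hy1
    have hay : -y < s 0 := by linarith
    have hms : m = (m-1) + 1 := by omega
    rw [hms, pow_succ] at hy1
    have hprod : P.eval (-y) * P.eval (s 0) < 0 := by
      rcases neg_one_pow_eq (m-1) with h | h <;> rw [h] at h1 hy1 <;> nlinarith
    obtain ⟨x, hx1, hx2, hx3⟩ := exists_root_between P hay hprod
    exact ⟨x, hx2, hx3⟩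
  -- choice function for the m roots of P
  have key : ∀ j : ℕ, ∃ x : ℝ, (j < m → P.eval x = 0) ∧ (j + 1 < m → x < s j) ∧
      (1 ≤ j → j < m → s (j-1) < x) := by
    intro j
    rcases Nat.eq_zero_or_pos j with rfl | hj1
    · obtain ⟨x, hx1, hx2⟩ := hbotroot
      exact ⟨x, fun _ => hx2, fun _ => hx1, fun h => by omega⟩
    rcases lt_or_ge (j+1) m with hjm | hjm
    · obtain ⟨x, hx1, hx2, hx3⟩ := hmid (j-1) (by omega)
      have hj : j - 1 + 1 = j := by omega
      rw [hj] at hx2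
      exact ⟨x, fun _ => hx3, fun _ => hx2, fun _ _ => hx1⟩
    rcases Nat.lt_or_ge j m with hjm2 | hjm2
    · obtain ⟨x, hx1, hx2⟩ := htoproot
      have hj : j - 1 = m - 2 := by omega
      exact ⟨x, fun _ => hx2, fun h => by omega, fun _ _ => by rw [hj]; exact hx1⟩
    · exact ⟨0, fun h => by omega, fun h => by omega, fun _ h => by omega⟩
  set g : ℕ → ℝ := fun j => (key j).choose with hg
  have gspec : ∀ j : ℕ, (j < m → P.eval (g j) = 0) ∧ (j + 1 < m → g j < s j) ∧
      (1 ≤ j → j < m → s (j-1) < g j) := fun j => (key j).choose_spec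
  have gmono : ∀ j, j + 1 < m → g j < g (j+1) := by
    intro j hj
    have h1 : g j < s j := (gspec j).2.1 hj
    have h2 : s j < g (j+1) := by
      have := (gspec (j+1)).2.2 (by omega) hj
      simpa using this
    linarith
  have gmono' : ∀ j k, j < k → k < m → g j < g k := by
    intro j k hjk hk
    induction k with
    | zero => omega
    | succ k ih =>
      rcases Nat.lt_or_ge j k with h | h
      · exact (ih (by omega) (by omega)).trans (gmono k hk)
      · have : j = k := by omega
        subst this
        exact gmono j hk
  set PL : List ℝ := List.ofFn (fun t : Fin m => g t) with hPL
  have hPLlen : PL.length = m := by simp [hPL]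
  have hPLget : ∀ i (h : i < m), PL[i]'(by omega) = g i := by
    intro i h
    simp [hPL]
  have hPLpair : PL.Pairwise (· < ·) := by
    rw [List.pairwise_iff_getElem]
    intro i j hi hj hij
    rw [hPLget i (by rw [← hPLlen]; omega), hPLget j (by rw [← hPLlen]; omega)]
    exact gmono' i j hij (by rw [← hPLlen]; omega)
  have hPLnodup : PL.Nodup := hPLpair.imp ne_of_lt
  have hMsub : (↑PL : Multiset ℝ) ≤ P.roots := by
    rw [Multiset.le_iff_subset (by exact_mod_cast hPLnodup)]
    intro a ha
    have ha' : a ∈ PL := by exact_mod_cast ha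
    obtain ⟨jj, hjj, rfl⟩ := List.mem_iff_getElem.mp ha'
    rw [hPLget jj (by rw [← hPLlen]; omega)]
    rw [mem_roots hPne]
    exact (gspec jj).1 (by rw [← hPLlen]; omega)
  have hroots_eq : P.roots = ↑PL := by
    refine (Multiset.eq_of_le_of_card_le hMsub ?_).symm
    simp only [Multiset.coe_card, hPLlen]
    rw [← hdegP]
    exact P.card_roots'
  have hcard : P.roots.card = m := by rw [hroots_eq]; simpa using hPLlen
  have hnodup : P.roots.Nodup := by rw [hroots_eq]; exact_mod_cast hPLnodup
  have hPsort : P.roots.sort (· ≤ ·) = PL := by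
    refine List.Perm.eq_of_pairwise' (Multiset.pairwise_sort _ _) (hPLpair.imp le_of_lt) ?_
    rw [← Multiset.coe_eq_coe, Multiset.sort_eq, hroots_eq]
  refine ⟨⟨hcard, hnodup⟩, ?_⟩
  intro i hi
  have hgi : (P.roots.sort (· ≤ ·))[i]! = g i := by
    rw [hPsort, getElem!_pos PL i (by rw [hPLlen]; omega), hPLget i (by omega)]
  have hgi1 : (P.roots.sort (· ≤ ·))[i+1]! = g (i+1) := by
    rw [hPsort, getElem!_pos PL (i+1) (by rw [hPLlen]; omega), hPLget (i+1) (by omega)]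
  rw [hgi, hgi1]
  constructor
  · exact (gspec i).2.1 hi
  · have := (gspec (i+1)).2.2 (by omega) hi
    simpa [hsdef] using this
end

section
/- Let Q be a real polynomial with positive leading coefficient and suppose a is the largest real root of Q', where Q' has all real simple roots and Q'(x)^2 - Q(x)Q''(x) > 0 for all real x. Then Q(a) < 0. -/
open Polynomial Filter Topology

theorem eval_largest_crit_neg (m : ℕ) (hm : 2 ≤ m) (Q : ℝ[X]) (hdeg : Q.natDegree = m)
    (hlead : 0 < Q.leadingCoeff)
    (hineq : ∀ x : ℝ,
      ((derivative Q).eval x) ^ 2 - Q.eval x * ((derivative (derivative Q)).eval x) > 0)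
    (hQ' : (derivative Q).roots.card = m - 1 ∧ (derivative Q).roots.Nodup)
    (a : ℝ) (ha : a ∈ (derivative Q).roots) (hmax : ∀ b ∈ (derivative Q).roots, b ≤ a) :
    Q.eval a < 0 := by
  have hQ'ne : derivative Q ≠ 0 := (mem_roots'.mp ha).1
  have hroot : (derivative Q).eval a = 0 := (mem_roots'.mp ha).2
  -- leading coefficient of Q'
  have hcoeff : (derivative Q).coeff (m - 1) = Q.coeff m * m := by
    rw [coeff_derivative]
    have : m - 1 + 1 = m := by omega
    rw [this]
    have h2 : ((m - 1 : ℕ) : ℝ) = (m : ℝ) - 1 := by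
      push_cast [Nat.cast_sub (by omega : 1 ≤ m)]
      ring
    rw [h2]
    ring
  have hcm : 0 < Q.coeff m := by rwa [← hdeg, ← leadingCoeff]
  have hcpos : 0 < (derivative Q).coeff (m - 1) := by
    rw [hcoeff]; positivity
  have hndle : (derivative Q).natDegree ≤ m - 1 := by
    have := natDegree_derivative_le Q
    omega
  have hnd : (derivative Q).natDegree = m - 1 :=
    le_antisymm hndle (le_natDegree_of_ne_zero hcpos.ne')
  have hlc : 0 < (derivative Q).leadingCoeff := by
    rwa [leadingCoeff, hnd]
  have hdegpos : 0 < (derivative Q).degree := by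
    rw [degree_eq_natDegree hQ'ne, hnd]
    exact_mod_cast by omega
  have htop : Tendsto (fun x => (derivative Q).eval x) atTop atTop :=
    (derivative Q).tendsto_atTop_of_leadingCoeff_nonneg hdegpos hlc.le
  -- Q' > 0 strictly to the right of a
  have hpos : ∀ x, a < x → 0 < (derivative Q).eval x := by
    intro x hx
    by_contra hle
    push_neg at hle
    have hne : (derivative Q).eval x ≠ 0 := by
      intro h0
      have : x ∈ (derivative Q).roots := by
        rw [mem_roots']; exact ⟨hQ'ne, h0⟩
      exact absurd (hmax x this) (not_le.mpr hx)
    have hneg : (derivative Q).eval x < 0 := lt_of_le_of_ne hle hne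
    obtain ⟨z, hz⟩ := (htop.eventually_gt_atTop 0).and (eventually_gt_atTop x) |>.exists
    obtain ⟨c, hc, hc0⟩ := intermediate_value_Ioo hz.2.le
      ((derivative Q).continuousOn (s := Set.Icc x z)) (Set.mem_Ioo.mpr ⟨hneg, hz.1⟩)
    have : c ∈ (derivative Q).roots := by rw [mem_roots']; exact ⟨hQ'ne, hc0⟩
    have := hmax c this
    have := hc.1
    linarith
  -- second derivative at a is nonnegative
  have hderiv : HasDerivAt (fun x => (derivative Q).eval x)
      ((derivative (derivative Q)).eval a) a := (derivative Q).hasDerivAt a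
  have hslope : Tendsto (slope (fun x => (derivative Q).eval x) a) (𝓝[>] a)
      (𝓝 ((derivative (derivative Q)).eval a)) :=
    (hasDerivAt_iff_tendsto_slope.mp hderiv).mono_left
      (nhdsWithin_mono a fun y hy => ne_of_gt hy)
  have hQ'' : 0 ≤ (derivative (derivative Q)).eval a := by
    refine ge_of_tendsto hslope ?_
    filter_upwards [self_mem_nhdsWithin] with x hx
    have hx' : a < x := hx
    rw [slope_def_field, hroot]
    have := hpos x hx'
    have : 0 ≤ (derivative Q).eval x / (x - a) :=
      div_nonneg (hpos x hx').le (by linarith)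
    simpa using this
  have hkey := hineq a
  rw [hroot] at hkey
  nlinarith [hkey, hQ'']
end
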